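/- Let A_0 be a real symmetric positive definite n×n matrix, let x_0, …, x_{T−1} ∈ ℝⁿ, define recursively A_{t+1} = A_t + x_t x_tᵀ, let c ≥ 0, and let R_0, …, R_{T−1} be real numbers satisfying 0 ≤ R_t and R_t² ≤ 9·c²·min(x_tᵀ A_t⁻¹ x_t, 1) for each t. Then Σ_{t=0}^{T−1} R_t ≤ 3·c·√(2·T·(log det(A_T) − log det(A_0))). -/

import Mathlib

open Matrix

lemma det_step_aux {n : ℕ} {A : Matrix (Fin n) (Fin n) ℝ} (hA : A.PosDef) (x : Fin n → ℝ) :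
    (A + vecMulVec x x).det = A.det * (1 + x ⬝ᵥ A⁻¹ *ᵥ x) := by
  have hsym : A⁻¹ᵀ = A⁻¹ := by
    ext i j
    simpa using hA.isHermitian.inv.apply i j
  rw [vecMulVec_eq Unit, det_add_replicateCol_mul_replicateRow (isUnit_iff_ne_zero.mpr hA.det_pos.ne')]
  congr 1
  have h1 : replicateRow Unit x * A⁻¹ * replicateCol Unit x = replicateRow Unit (x ᵥ* A⁻¹) * replicateCol Unit x := by
    rw [replicateRow_vecMul]
  rw [h1, det_unique, Matrix.add_apply, one_apply_eq, replicateRow_mul_replicateCol_apply, ← mulVec_transpose, hsym,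
    dotProduct_comm]

lemma semidef_step_aux {n : ℕ} (x : Fin n → ℝ) : (vecMulVec x x).PosSemidef := by
  rw [vecMulVec_eq Unit]
  simpa using Matrix.posSemidef_self_mul_conjTranspose (replicateCol Unit x)

lemma min_le_two_log_aux {s : ℝ} (hs : 0 ≤ s) : min s 1 ≤ 2 * Real.log (1 + s) := by
  rcases le_or_gt s 1 with h | h
  · rw [min_eq_left h]
    have h1 : (0:ℝ) < 1 + s := by linarith
    have := Real.one_sub_inv_le_log_of_pos h1
    have h2 : 1 - (1 + s)⁻¹ = s / (1 + s) := by field_simp; ring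
    rw [h2] at this
    have h3 : s ≤ 2 * (s / (1 + s)) := by
      rw [mul_div_assoc', le_div_iff₀ h1]
      nlinarith
    linarith
  · rw [min_eq_right h.le]
    have h2 : Real.log 2 ≤ Real.log (1 + s) := by
      apply Real.log_le_log (by norm_num)
      linarith
    have := Real.log_two_gt_d9
    linarith

/-- Aggregation of per-step regret bounds: if `R_t² ≤ 9 c² min (x_tᵀ A_t⁻¹ x_t) 1`
along the recursion `A_{t+1} = A_t + x_t x_tᵀ`, then
`∑_{t<T} R_t ≤ 3 c √(2 T (log det A_T − log det A_0))`. -/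
theorem stmt_14 {n : ℕ} (T : ℕ) (x : ℕ → (Fin n → ℝ))
    (A : ℕ → Matrix (Fin n) (Fin n) ℝ) (hA0 : (A 0).PosDef)
    (hrec : ∀ t, A (t + 1) = A t + vecMulVec (x t) (x t))
    (c : ℝ) (hc : 0 ≤ c) (R : ℕ → ℝ)
    (hR0 : ∀ t < T, 0 ≤ R t)
    (hR : ∀ t < T, (R t) ^ 2 ≤ 9 * c ^ 2 * min (x t ⬝ᵥ ((A t)⁻¹ *ᵥ x t)) 1) :
    ∑ t ∈ Finset.range T, R t ≤
      3 * c * Real.sqrt (2 * T * (Real.log (A T).det - Real.log (A 0).det)) := by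
  have hPD : ∀ t, (A t).PosDef := by
    intro t
    induction t with
    | zero => exact hA0
    | succ t ih => rw [hrec t]; exact ih.add_posSemidef (semidef_step_aux (x t))
  set s : ℕ → ℝ := fun t => x t ⬝ᵥ (A t)⁻¹ *ᵥ x t with hs
  have hs0 : ∀ t, 0 ≤ s t := by
    intro t
    have := ((hPD t).posSemidef.inv).dotProduct_mulVec_nonneg (x t)
    simpa [hs] using this
  have hlog : ∀ t, min (s t) 1 ≤
      2 * (Real.log (A (t + 1)).det - Real.log (A t).det) := by
    intro t
    have hdet := det_step_aux (hPD t) (x t)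
    rw [← hrec t] at hdet
    have h1 : (0:ℝ) < 1 + s t := by have := hs0 t; simp only [hs] at this ⊢; linarith
    have heq : Real.log (A (t + 1)).det = Real.log (A t).det + Real.log (1 + s t) := by
      rw [hdet, Real.log_mul (hPD t).det_pos.ne' h1.ne']
    have := min_le_two_log_aux (hs0 t)
    rw [heq]
    linarith
  have hsum : ∑ t ∈ Finset.range T, min (s t) 1 ≤
      2 * (Real.log (A T).det - Real.log (A 0).det) := by
    calc ∑ t ∈ Finset.range T, min (s t) 1
        ≤ ∑ t ∈ Finset.range T, 2 * (Real.log (A (t + 1)).det - Real.log (A t).det) :=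
          Finset.sum_le_sum fun t _ => hlog t
      _ = 2 * ∑ t ∈ Finset.range T, (Real.log (A (t + 1)).det - Real.log (A t).det) :=
          (Finset.mul_sum _ _ _).symm
      _ = 2 * (Real.log (A T).det - Real.log (A 0).det) := by
          rw [Finset.sum_range_sub (fun t => Real.log (A t).det)]
  have key : (∑ t ∈ Finset.range T, R t) ^ 2 ≤
      9 * c ^ 2 * (2 * T * (Real.log (A T).det - Real.log (A 0).det)) := by
    have h1 : (∑ t ∈ Finset.range T, R t) ^ 2 ≤ T * ∑ t ∈ Finset.range T, R t ^ 2 := by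
      have := sq_sum_le_card_mul_sum_sq (s := Finset.range T) (f := R)
      simpa using this
    have h2 : ∑ t ∈ Finset.range T, R t ^ 2 ≤ 9 * c ^ 2 * ∑ t ∈ Finset.range T, min (s t) 1 := by
      rw [Finset.mul_sum]
      exact Finset.sum_le_sum fun t ht => hR t (Finset.mem_range.mp ht)
    have h3 : 9 * c ^ 2 * ∑ t ∈ Finset.range T, min (s t) 1 ≤
        9 * c ^ 2 * (2 * (Real.log (A T).det - Real.log (A 0).det)) := by
      apply mul_le_mul_of_nonneg_left hsum (by positivity)
    have hT : (0:ℝ) ≤ T := Nat.cast_nonneg T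
    nlinarith [mul_le_mul_of_nonneg_left (h2.trans h3) hT]
  have hrw : 3 * c * Real.sqrt (2 * T * (Real.log (A T).det - Real.log (A 0).det)) =
      Real.sqrt (9 * c ^ 2 * (2 * T * (Real.log (A T).det - Real.log (A 0).det))) := by
    conv_rhs => rw [show (9:ℝ) * c ^ 2 = (3 * c) ^ 2 by ring,
      Real.sqrt_mul (by positivity), Real.sqrt_sq (by positivity)]
  rw [hrw]
  exact Real.le_sqrt_of_sq_le key
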